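/- Let T > 0, d_x, d_y ∈ ℕ. Let A, Ψ, G : [0,T] → ℝ^{d_x×d_x}, C : [0,T] → ℝ^{d_y×d_x}, σ : [0,T] → ℝ^{d_x×d_ω}, γ : [0,T] → ℝ^{d_y×d_ν} be continuous with γ(t)γ(t)ᵀ invertible. Suppose Σ : [0,T] → ℝ^{2d_x×2d_x} is continuously differentiable with symmetric values, with blocks Σ_xx, Σ_xz, Σ_zx, Σ_zz. Define S := Σ_xx − Σ_zz, L := S Cᵀ(γγᵀ)⁻¹, Ã := [[A, −GΨ],[LC, A − GΨ − LC]], and D̃ := [[σσᵀ, O],[O, Lγγᵀ Lᵀ]]. If dΣ/dt = D̃ + ÃΣ + ΣÃᵀ on [0,T] and Σ_xz(0) = Σ_zz(0), then Σ_xz(t) = Σ_zz(t) for all t ∈ [0,T]. -/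

import Mathlib

open Matrix Set
set_option maxHeartbeats 1000000

attribute [local instance] Matrix.frobeniusNormedAddCommGroup Matrix.frobeniusNormedSpace
  Matrix.frobeniusNormedRing

/-- Entrywise derivatives give the derivative of a matrix-valued function. -/
theorem aux_hasDerivAt {n m : Type*} [Fintype n] [Fintype m] [DecidableEq n] [DecidableEq m]
    {f : ℝ → Matrix n m ℝ} {f' : Matrix n m ℝ} {t : ℝ}
    (h : ∀ i j, HasDerivAt (fun τ => f τ i j) (f' i j) t) : HasDerivAt f f' t := by
  have key : HasDerivAt (fun τ => ∑ i : n, ∑ j : m, Matrix.single i j (f τ i j))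
      (∑ i : n, ∑ j : m, Matrix.single i j (f' i j)) t := by
    refine HasDerivAt.fun_sum fun i _ => HasDerivAt.fun_sum fun j _ => ?_
    simpa [Matrix.smul_single, smul_eq_mul, mul_one] using
      (h i j).smul_const (Matrix.single i j (1:ℝ))
  simpa only [← matrix_eq_sum_single] using key

theorem stmt_8 {dx dy dω dν : ℕ} (T : ℝ) (hT : 0 < T)
    (A Ψ G : ℝ → Matrix (Fin dx) (Fin dx) ℝ)
    (C : ℝ → Matrix (Fin dy) (Fin dx) ℝ)
    (σ : ℝ → Matrix (Fin dx) (Fin dω) ℝ)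
    (γ : ℝ → Matrix (Fin dy) (Fin dν) ℝ)
    (hA : Continuous A) (hΨ : Continuous Ψ) (hG : Continuous G)
    (hC : Continuous C) (hσ : Continuous σ) (hγ : Continuous γ)
    (hγinv : ∀ t, IsUnit (γ t * (γ t)ᵀ).det)
    (Sig : ℝ → Matrix (Fin dx ⊕ Fin dx) (Fin dx ⊕ Fin dx) ℝ)
    (hSigcont : Continuous Sig)
    (hSigsymm : ∀ t, (Sig t).IsSymm)
    (S : ℝ → Matrix (Fin dx) (Fin dx) ℝ)
    (L : ℝ → Matrix (Fin dx) (Fin dy) ℝ)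
    (hS : ∀ t, S t = (Sig t).toBlocks₁₁ - (Sig t).toBlocks₂₂)
    (hL : ∀ t, L t = S t * (C t)ᵀ * (γ t * (γ t)ᵀ)⁻¹)
    (Atil Dtil : ℝ → Matrix (Fin dx ⊕ Fin dx) (Fin dx ⊕ Fin dx) ℝ)
    (hAtil : ∀ t, Atil t =
      fromBlocks (A t) (-(G t * Ψ t)) (L t * C t) (A t - G t * Ψ t - L t * C t))
    (hDtil : ∀ t, Dtil t =
      fromBlocks (σ t * (σ t)ᵀ) 0 0 (L t * (γ t * (γ t)ᵀ) * (L t)ᵀ))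
    (hSig : ∀ t ∈ Icc (0 : ℝ) T, ∀ i j, HasDerivAt (fun τ => Sig τ i j)
      ((Dtil t + Atil t * Sig t + Sig t * (Atil t)ᵀ) i j) t)
    (h0 : (Sig 0).toBlocks₁₂ = (Sig 0).toBlocks₂₂) :
    ∀ t ∈ Icc (0 : ℝ) T, (Sig t).toBlocks₁₂ = (Sig t).toBlocks₂₂ := by
  classical
  set E : ℝ → Matrix (Fin dx) (Fin dx) ℝ :=
    fun t => (Sig t).toBlocks₁₂ - (Sig t).toBlocks₂₂ with hEdef
  set M₁ : ℝ → Matrix (Fin dx) (Fin dx) ℝ := fun t => A t - L t * C t with hM₁def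
  set M₂ : ℝ → Matrix (Fin dx) (Fin dx) ℝ :=
    fun t => (A t - G t * Ψ t - L t * C t)ᵀ with hM₂def
  set M₃ : ℝ → Matrix (Fin dx) (Fin dx) ℝ := fun t => (C t)ᵀ * (L t)ᵀ with hM₃def
  set E' : ℝ → Matrix (Fin dx) (Fin dx) ℝ :=
    fun t => M₁ t * E t + E t * M₂ t - (E t)ᵀ * M₃ t with hE'def
  -- the key algebraic identity
  have key : ∀ t, (Dtil t + Atil t * Sig t + Sig t * (Atil t)ᵀ).toBlocks₁₂
      - (Dtil t + Atil t * Sig t + Sig t * (Atil t)ᵀ).toBlocks₂₂ = E' t := by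
    intro t
    have hadd12 : ∀ (M N : Matrix (Fin dx ⊕ Fin dx) (Fin dx ⊕ Fin dx) ℝ),
        (M + N).toBlocks₁₂ = M.toBlocks₁₂ + N.toBlocks₁₂ := fun _ _ => rfl
    have hadd22 : ∀ (M N : Matrix (Fin dx ⊕ Fin dx) (Fin dx ⊕ Fin dx) ℝ),
        (M + N).toBlocks₂₂ = M.toBlocks₂₂ + N.toBlocks₂₂ := fun _ _ => rfl
    set X := (Sig t).toBlocks₁₁ with hX
    set Y := (Sig t).toBlocks₁₂ with hY
    set Z := (Sig t).toBlocks₂₁ with hZ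
    set W := (Sig t).toBlocks₂₂ with hW
    have hP : Sig t = fromBlocks X Y Z W := (fromBlocks_toBlocks _).symm
    have hZY : Z = Yᵀ := by
      ext i j
      exact ((hSigsymm t).apply (Sum.inl j) (Sum.inr i))
    have hWs : Wᵀ = W := by
      ext i j
      exact ((hSigsymm t).apply (Sum.inr i) (Sum.inr j))
    have hLγ : L t * (γ t * (γ t)ᵀ) * (L t)ᵀ = (X - W) * ((C t)ᵀ * (L t)ᵀ) := by
      rw [hL, Matrix.nonsing_inv_mul_cancel_right _ _ (hγinv t), hS, Matrix.mul_assoc]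
    rw [hAtil, hDtil, hP, hLγ]
    simp only [E', E, M₁, M₂, M₃, hP, fromBlocks_transpose, fromBlocks_multiply, hadd12, hadd22,
      toBlocks_fromBlocks₁₂, toBlocks_fromBlocks₂₂, Matrix.transpose_mul, hZY, hWs,
      Matrix.transpose_sub]
    noncomm_ring
  -- derivative of E
  have hder : ∀ t ∈ Icc (0:ℝ) T, HasDerivAt E (E' t) t := by
    intro t ht
    apply aux_hasDerivAt
    intro i j
    have h1 := (hSig t ht (Sum.inl i) (Sum.inr j)).sub (hSig t ht (Sum.inr i) (Sum.inr j))
    have h2 : E' t i j = (Dtil t + Atil t * Sig t + Sig t * (Atil t)ᵀ) (Sum.inl i) (Sum.inr j)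
        - (Dtil t + Atil t * Sig t + Sig t * (Atil t)ᵀ) (Sum.inr i) (Sum.inr j) := by
      rw [← key t]; rfl
    rw [h2]
    exact h1
  -- continuity facts
  have hEcont : Continuous E :=
    continuous_matrix fun i j =>
      (hSigcont.matrix_elem (Sum.inl i) (Sum.inr j)).sub
        (hSigcont.matrix_elem (Sum.inr i) (Sum.inr j))
  have hγγ : Continuous fun t => γ t * (γ t)ᵀ := hγ.matrix_mul hγ.matrix_transpose
  have hinv : Continuous fun t => (γ t * (γ t)ᵀ)⁻¹ := by
    rw [continuous_iff_continuousAt]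
    intro t
    have h1 : ContinuousAt Inv.inv (γ t * (γ t)ᵀ) :=
      continuousAt_matrix_inv _ (NormedRing.inverse_continuousAt (hγinv t).unit)
    exact ContinuousAt.comp (f := fun s => γ s * (γ s)ᵀ) (x := t) h1 hγγ.continuousAt
  have hScont : Continuous S := by
    have : S = fun t => (Sig t).toBlocks₁₁ - (Sig t).toBlocks₂₂ := funext hS
    rw [this]
    exact continuous_matrix fun i j =>
      (hSigcont.matrix_elem (Sum.inl i) (Sum.inl j)).sub
        (hSigcont.matrix_elem (Sum.inr i) (Sum.inr j))
  have hLcont : Continuous L := by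
    have : L = fun t => S t * (C t)ᵀ * (γ t * (γ t)ᵀ)⁻¹ := funext hL
    rw [this]
    exact (hScont.matrix_mul hC.matrix_transpose).matrix_mul hinv
  have hM₁c : Continuous M₁ := hA.sub (hLcont.matrix_mul hC)
  have hM₂c : Continuous M₂ := ((hA.sub (hG.matrix_mul hΨ)).sub
    (hLcont.matrix_mul hC)).matrix_transpose
  have hM₃c : Continuous M₃ := hC.matrix_transpose.matrix_mul hLcont.matrix_transpose
  obtain ⟨K₁, hK₁⟩ := isCompact_Icc.exists_bound_of_continuousOn
    (hM₁c.continuousOn : ContinuousOn M₁ (Icc (0:ℝ) T))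
  obtain ⟨K₂, hK₂⟩ := isCompact_Icc.exists_bound_of_continuousOn
    (hM₂c.continuousOn : ContinuousOn M₂ (Icc (0:ℝ) T))
  obtain ⟨K₃, hK₃⟩ := isCompact_Icc.exists_bound_of_continuousOn
    (hM₃c.continuousOn : ContinuousOn M₃ (Icc (0:ℝ) T))
  set K : ℝ := max K₁ 0 + max K₂ 0 + max K₃ 0 with hKdef
  have bound : ∀ x ∈ Ico (0:ℝ) T, ‖E' x‖ ≤ K * ‖E x‖ + 0 := by
    intro x hx
    have hx' : x ∈ Icc (0:ℝ) T := Ico_subset_Icc_self hx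
    have h1 : ‖M₁ x * E x‖ ≤ max K₁ 0 * ‖E x‖ :=
      le_trans (norm_mul_le _ _)
        (mul_le_mul_of_nonneg_right (le_trans (hK₁ x hx') (le_max_left _ _)) (norm_nonneg _))
    have h2 : ‖E x * M₂ x‖ ≤ max K₂ 0 * ‖E x‖ := by
      refine le_trans (norm_mul_le _ _) ?_
      calc ‖E x‖ * ‖M₂ x‖ ≤ ‖E x‖ * max K₂ 0 :=
            mul_le_mul_of_nonneg_left (le_trans (hK₂ x hx') (le_max_left _ _)) (norm_nonneg _)
        _ = max K₂ 0 * ‖E x‖ := mul_comm _ _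
    have h3 : ‖(E x)ᵀ * M₃ x‖ ≤ max K₃ 0 * ‖E x‖ := by
      refine le_trans (norm_mul_le _ _) ?_
      rw [Matrix.frobenius_norm_transpose]
      calc ‖E x‖ * ‖M₃ x‖ ≤ ‖E x‖ * max K₃ 0 :=
            mul_le_mul_of_nonneg_left (le_trans (hK₃ x hx') (le_max_left _ _)) (norm_nonneg _)
        _ = max K₃ 0 * ‖E x‖ := mul_comm _ _
    have h4 : ‖E' x‖ ≤ ‖M₁ x * E x‖ + ‖E x * M₂ x‖ + ‖(E x)ᵀ * M₃ x‖ :=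
      le_trans (norm_sub_le _ _) (by gcongr; exact norm_add_le _ _)
    have hKexp : K * ‖E x‖ = max K₁ 0 * ‖E x‖ + max K₂ 0 * ‖E x‖ + max K₃ 0 * ‖E x‖ := by
      rw [hKdef]; ring
    rw [add_zero, hKexp]
    linarith
  have hE0 : ‖E 0‖ ≤ 0 := by
    have : E 0 = 0 := by rw [hEdef]; simp [h0]
    simp [this]
  have main := norm_le_gronwallBound_of_norm_deriv_right_le hEcont.continuousOn
    (fun x hx => (hder x (Ico_subset_Icc_self hx)).hasDerivWithinAt) hE0 bound
  intro t ht
  have := main t ht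
  rw [sub_zero, gronwallBound_ε0_δ0] at this
  have hE0' : E t = 0 := norm_le_zero_iff.mp this
  have : (Sig t).toBlocks₁₂ - (Sig t).toBlocks₂₂ = 0 := hE0'
  exact sub_eq_zero.mp this
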